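/- Let G be a Polish group and let B ⊆ G be a Borel set that is invariant under conjugacy, i.e., gBg⁻¹ = B for every g ∈ G. Then B is left Haar null if and only if B is Haar null, and B is right Haar null if and only if B is Haar null. -/

import Mathlib

open MeasureTheory

/-- A set `A` in a topological group is *Haar null* if there are a Borel set `B ⊇ A` and a
Borel probability measure `μ` such that `μ (g • B • h) = 0` for all `g, h`. -/
def HaarNull {G : Type*} [Group G] [MeasurableSpace G] (A : Set G) : Prop :=
  ∃ B : Set G, A ⊆ B ∧ MeasurableSet B ∧
    ∃ μ : Measure G, IsProbabilityMeasure μ ∧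
      ∀ g h : G, μ ((fun b => g * b * h) '' B) = 0

/-- A Borel set `B` is *left Haar null* if some Borel probability measure annihilates all left
translates of `B`. -/
def LeftHaarNull {G : Type*} [Group G] [MeasurableSpace G] (B : Set G) : Prop :=
  ∃ μ : Measure G, IsProbabilityMeasure μ ∧ ∀ g : G, μ ((fun b => g * b) '' B) = 0

/-- A Borel set `B` is *right Haar null* if some Borel probability measure annihilates all right
translates of `B`. -/
def RightHaarNull {G : Type*} [Group G] [MeasurableSpace G] (B : Set G) : Prop :=
  ∃ μ : Measure G, IsProbabilityMeasure μ ∧ ∀ g : G, μ ((fun b => b * g) '' B) = 0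

private lemma conj_translate {G : Type*} [Group G] (B : Set G)
    (hinv : ∀ g : G, (fun x => g * x * g⁻¹) '' B = B) (g h : G) :
    (fun b => g * b * h) '' B = (fun b => (g * h) * b) '' B := by
  ext x
  constructor
  · rintro ⟨b, hb, rfl⟩
    refine ⟨h⁻¹ * b * h, ?_, by group⟩
    have := hinv h⁻¹
    rw [← this]
    exact ⟨b, hb, by group⟩
  · rintro ⟨b, hb, rfl⟩
    refine ⟨h * b * h⁻¹, ?_, by group⟩
    rw [← hinv h]
    exact ⟨b, hb, rfl⟩

/-- For a conjugacy-invariant Borel set, left Haar null, right Haar null and Haar null are all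
equivalent. -/
theorem stmt_1 {G : Type*} [Group G] [TopologicalSpace G] [IsTopologicalGroup G]
    [PolishSpace G] [MeasurableSpace G] [BorelSpace G] (B : Set G)
    (hB : MeasurableSet B)
    (hinv : ∀ g : G, (fun x => g * x * g⁻¹) '' B = B) :
    (LeftHaarNull B ↔ HaarNull B) ∧ (RightHaarNull B ↔ HaarNull B) := by
  have hRL : (fun b => b * 1) '' B = B := by simp
  have left_iff : LeftHaarNull B ↔ HaarNull B := by
    constructor
    · rintro ⟨μ, hμ, hnull⟩
      refine ⟨B, le_refl _, hB, μ, hμ, fun g h => ?_⟩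
      rw [conj_translate B hinv g h]
      exact hnull (g * h)
    · rintro ⟨B', hBB', hB', μ, hμ, hnull⟩
      refine ⟨μ, hμ, fun g => ?_⟩
      have : (fun b => g * b) '' B ⊆ (fun b => g * b * 1) '' B' := by
        intro x hx
        obtain ⟨b, hb, rfl⟩ := hx
        exact ⟨b, hBB' hb, by group⟩
      exact measure_mono_null this (hnull g 1)
  refine ⟨left_iff, ?_⟩
  have hright : ∀ g : G, (fun b => b * g) '' B = (fun b => g * b) '' B := by
    intro g
    have := conj_translate B hinv 1 g
    simpa using this
  constructor
  · rintro ⟨μ, hμ, hnull⟩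
    apply left_iff.mp
    exact ⟨μ, hμ, fun g => by rw [← hright g]; exact hnull g⟩
  · intro h
    obtain ⟨μ, hμ, hnull⟩ := left_iff.mpr h
    exact ⟨μ, hμ, fun g => by rw [hright g]; exact hnull g⟩
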